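/- Let L be a finite group, let Z = Z(L) be its center, and let φ : L → L/Z be the quotient map. Suppose L/Z is an internal direct product of normal subgroups Y_1, ..., Y_k, each of which is a nonabelian simple group. Then there exist subgroups Q_1, ..., Q_k of L such that for each i: φ(Q_i) = Y_i; Q_i is perfect (Q_i' = Q_i); Z(Q_i) = Q_i ∩ Z, so that Q_i/Z(Q_i) ≅ Y_i and hence Q_i is quasisimple; and the Q_i pairwise commute elementwise ([Q_i, Q_j] = 1 for i ≠ j), so that the product Q_1 Q_2 ⋯ Q_k is an internal central product. -/

import Mathlib

open scoped Pointwise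
open scoped commutatorElement

/-- A commutator is unchanged by multiplying the left entry by a central element. -/
lemma comm_center_left {G : Type*} [Group G] (a b z : G) (hz : z ∈ Subgroup.center G) :
    ⁅a * z, b⁆ = ⁅a, b⁆ := by
  have h := Subgroup.mem_center_iff.mp hz
  simp only [commutatorElement_def, mul_inv_rev, mul_assoc]
  congr 1
  rw [← mul_assoc z b, ← h b, mul_assoc b z, mul_inv_cancel_left]

lemma comm_center_right {G : Type*} [Group G] (a b z : G) (hz : z ∈ Subgroup.center G) :
    ⁅a, b * z⁆ = ⁅a, b⁆ := by
  rw [← commutatorElement_inv, comm_center_left _ _ _ hz, commutatorElement_inv]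

/-- A nonabelian simple group is perfect (as a subgroup of an ambient group). -/
lemma perfect_of_simple_nonabelian {G : Type*} [Group G] (Y : Subgroup G)
    (hsimple : IsSimpleGroup Y)
    (hnonab : ∃ a ∈ Y, ∃ b ∈ Y, a * b ≠ b * a) : ⁅Y, Y⁆ = Y := by
  have hcomm : commutator ↥Y = ⊤ := by
    rcases hsimple.eq_bot_or_eq_top_of_normal (commutator ↥Y)
      (Subgroup.commutator_normal ⊤ ⊤) with h | h
    · exfalso
      obtain ⟨a, ha, b, hb, hab⟩ := hnonab
      have : ⁅(⟨a, ha⟩ : Y), (⟨b, hb⟩ : Y)⁆ ∈ commutator ↥Y :=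
        Subgroup.commutator_mem_commutator (Subgroup.mem_top _) (Subgroup.mem_top _)
      rw [h, Subgroup.mem_bot, commutatorElement_eq_one_iff_mul_comm] at this
      exact hab (congrArg Subtype.val this)
    · exact h
  have : ⁅Y, Y⁆ = Subgroup.map Y.subtype (commutator ↥Y) := by
    rw [commutator, Subgroup.map_commutator, ← MonoidHom.range_eq_map, Subgroup.range_subtype]
  rw [this, hcomm, ← MonoidHom.range_eq_map, Subgroup.range_subtype]

/-- A nonabelian simple group has trivial center (elementwise version). -/
lemma center_trivial_of_simple_nonabelian {G : Type*} [Group G] (Y : Subgroup G)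
    (hsimple : IsSimpleGroup Y)
    (hnonab : ∃ a ∈ Y, ∃ b ∈ Y, a * b ≠ b * a)
    (x : G) (hx : x ∈ Y) (hc : ∀ y ∈ Y, Commute x y) : x = 1 := by
  have hxc : (⟨x, hx⟩ : Y) ∈ Subgroup.center ↥Y := by
    rw [Subgroup.mem_center_iff]
    intro ⟨g, hg⟩
    exact Subtype.ext ((hc g hg).symm)
  rcases hsimple.eq_bot_or_eq_top_of_normal (Subgroup.center ↥Y)
      inferInstance with h | h
  · rw [h, Subgroup.mem_bot] at hxc
    exact congrArg Subtype.val hxc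
  · exfalso
    obtain ⟨a, ha, b, hb, hab⟩ := hnonab
    have : (⟨a, ha⟩ : Y) ∈ Subgroup.center ↥Y := h ▸ Subgroup.mem_top _
    exact hab (congrArg Subtype.val (Subgroup.mem_center_iff.mp this ⟨b, hb⟩).symm)

/-- Let `L` be a finite group with center `Z`, and suppose `L/Z` is an
internal direct product of normal subgroups `Y₁, ..., Yₙ`, each nonabelian simple (internal
direct product encoded by the bijectivity of the product map `Π i, Y i → L/Z`).  Then there
are subgroups `Q i ≤ L` with `φ(Q i) = Y i`, each `Q i` perfect, with `Z(Q i) = Q i ∩ Z`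
(so each `Q i` is quasisimple), and the `Q i` pairwise commute elementwise, so their product
is an internal central product. -/
theorem stmt_14 (L : Type) [Group L] [Finite L] (n : ℕ)
    (Y : Fin n → Subgroup (L ⧸ Subgroup.center L))
    (hnormal : ∀ i, (Y i).Normal)
    (hsimple : ∀ i, IsSimpleGroup (Y i))
    (hnonab : ∀ i, ∃ a ∈ Y i, ∃ b ∈ Y i, a * b ≠ b * a)
    (hcommY : Pairwise fun i j =>
      ∀ x y : L ⧸ Subgroup.center L, x ∈ Y i → y ∈ Y j → Commute x y)
    (hprod : Function.Bijective (Subgroup.noncommPiCoprod hcommY)) :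
    ∃ Q : Fin n → Subgroup L,
      (∀ i, Subgroup.map (QuotientGroup.mk' (Subgroup.center L)) (Q i) = Y i) ∧
      (∀ i, ⁅Q i, Q i⁆ = Q i) ∧
      (∀ i, ∀ x ∈ Q i, ((∀ y ∈ Q i, Commute x y) ↔ x ∈ Subgroup.center L)) ∧
      Pairwise fun i j => ∀ x ∈ Q i, ∀ y ∈ Q j, Commute x y := by
  set Z := Subgroup.center L with hZ
  set φ := QuotientGroup.mk' Z with hφ
  have hφsurj : Function.Surjective φ := QuotientGroup.mk'_surjective Z
  set P : Fin n → Subgroup L := fun i => (Y i).comap φ with hP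
  set Q : Fin n → Subgroup L := fun i => ⁅P i, P i⁆ with hQ
  have hmapP : ∀ i, (P i).map φ = Y i := fun i =>
    Subgroup.map_comap_eq_self_of_surjective hφsurj (Y i)
  -- (1) φ(Q i) = Y i
  have hmap : ∀ i, (Q i).map φ = Y i := by
    intro i
    rw [hQ, Subgroup.map_commutator, hmapP i,
      perfect_of_simple_nonabelian (Y i) (hsimple i) (hnonab i)]
  -- P i = Q i ⊔ Z
  have hPQZ : ∀ i, P i = Q i ⊔ Z := by
    intro i
    calc P i = ((Q i).map φ).comap φ := by rw [hmap i]
      _ = Q i ⊔ φ.ker := Subgroup.comap_map_eq φ (Q i)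
      _ = Q i ⊔ Z := by rw [hφ, QuotientGroup.ker_mk']
  -- (2) each Q i is perfect
  have hperf : ∀ i, ⁅Q i, Q i⁆ = Q i := by
    intro i
    refine le_antisymm ?_ ?_
    · have hQP : Q i ≤ P i := by
        rw [hQ]
        refine Subgroup.commutator_le.mpr fun g₁ h₁ g₂ h₂ => ?_
        exact mul_mem (mul_mem (mul_mem h₁ h₂) (inv_mem h₁)) (inv_mem h₂)
      exact Subgroup.commutator_mono hQP hQP
    · show ⁅P i, P i⁆ ≤ ⁅Q i, Q i⁆
      rw [hPQZ i]
      refine Subgroup.commutator_le.mpr fun g₁ h₁ g₂ h₂ => ?_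
      have h₁' : g₁ ∈ (Q i : Set L) * (Z : Set L) := by
        rw [← Subgroup.mul_normal (Q i) Z]; exact h₁
      have h₂' : g₂ ∈ (Q i : Set L) * (Z : Set L) := by
        rw [← Subgroup.mul_normal (Q i) Z]; exact h₂
      obtain ⟨q₁, hq₁, z₁, hz₁, rfl⟩ := h₁'
      obtain ⟨q₂, hq₂, z₂, hz₂, rfl⟩ := h₂'
      rw [comm_center_left _ _ _ hz₁, comm_center_right _ _ _ hz₂]
      exact Subgroup.commutator_mem_commutator hq₁ hq₂
  -- x ∈ Z ↔ φ x = 1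
  have hker : ∀ x : L, x ∈ Z ↔ φ x = 1 := by
    intro x
    exact ⟨fun h => (QuotientGroup.eq_one_iff x).mpr h,
      fun h => (QuotientGroup.eq_one_iff x).mp h⟩
  refine ⟨Q, hmap, hperf, ?_, ?_⟩
  -- (3) Z(Q i) = Q i ∩ Z
  · intro i x hx
    constructor
    · intro hc
      rw [hker]
      refine center_trivial_of_simple_nonabelian (Y i) (hsimple i) (hnonab i) (φ x)
        (by rw [← hmap i]; exact Subgroup.mem_map_of_mem φ hx) ?_
      intro y hy
      rw [← hmap i] at hy
      obtain ⟨w, hw, rfl⟩ := hy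
      exact (hc w hw).map φ
    · intro hxZ y _
      exact (Subgroup.mem_center_iff.mp hxZ y).symm
  -- (4) pairwise elementwise commuting
  · intro i j hij
    have hcentral : ∀ {i' j'}, i' ≠ j' → ⁅Q i', Q j'⁆ ≤ Z := by
      intro i' j' h
      refine Subgroup.commutator_le.mpr fun g₁ h₁ g₂ h₂ => ?_
      rw [hker, map_commutatorElement, commutatorElement_eq_one_iff_commute]
      exact hcommY h (φ g₁) (φ g₂)
        (by rw [← hmap i']; exact Subgroup.mem_map_of_mem φ h₁)
        (by rw [← hmap j']; exact Subgroup.mem_map_of_mem φ h₂)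
    have hbot : ∀ {H K : Subgroup L}, H ≤ Z → ⁅H, K⁆ = ⊥ := by
      intro H K hH
      rw [eq_bot_iff]
      refine Subgroup.commutator_le.mpr fun g₁ h₁ g₂ _ => ?_
      rw [Subgroup.mem_bot, commutatorElement_eq_one_iff_mul_comm]
      exact (Subgroup.mem_center_iff.mp (hH h₁) g₂).symm
    have h3 : ⁅⁅Q i, Q i⁆, Q j⁆ = ⊥ :=
      Subgroup.commutator_commutator_eq_bot_of_rotate
        (hbot (hcentral hij)) (hbot (hcentral hij.symm))
    rw [hperf i] at h3
    intro x hx y hy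
    have := Subgroup.commutator_mem_commutator hx hy
    rw [h3, Subgroup.mem_bot, commutatorElement_eq_one_iff_commute] at this
    exact this
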